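/- Let L_1 ≤ L_2 ≤ ⋯ ≤ L_m be positive real numbers. Define the rank of each index by: rank(1) = 1, and for t ≥ 2, rank(t) = rank(t−1) if L_t ≤ 2·Σ_{s=1}^{t−1} L_s, and rank(t) = rank(t−1) + 1 otherwise. Then for any two indices t, t' ∈ {1, …, m} with rank(t) = rank(t'), L_t / L_{t'} ≤ 3^m. -/

import Mathlib

lemma stmt15_aux_2n (n : ℕ) : 2 * n ≤ 3 ^ n := by
  induction n with
  | zero => simp
  | succ n ih =>
    have h1 : 1 ≤ 3 ^ n := Nat.one_le_pow n 3 (by norm_num)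
    rw [pow_succ]
    omega

/-- **Claim 4.5.** Let `L 1 ≤ L 2 ≤ ⋯ ≤ L m` be positive reals, and define ranks by
`rank 1 = 1` and, for `t ≥ 2`, `rank t = rank (t−1)` if `L t ≤ 2·Σ_{s=1}^{t−1} L s`
and `rank t = rank (t−1) + 1` otherwise. Then any two indices of the same rank have
lengths within a factor `3^m` of each other. -/
theorem stmt15 (m : ℕ) (hm : 0 < m) (L : ℕ → ℝ)
    (hpos : ∀ t, 1 ≤ t → t ≤ m → 0 < L t)
    (hsort : ∀ t, 1 ≤ t → t + 1 ≤ m → L t ≤ L (t + 1))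
    (rank : ℕ → ℕ) (hrank1 : rank 1 = 1)
    (hrank : ∀ t, 2 ≤ t → t ≤ m →
      rank t = if L t ≤ 2 * ∑ s ∈ Finset.Icc 1 (t - 1), L s
        then rank (t - 1) else rank (t - 1) + 1)
    (t t' : ℕ) (ht1 : 1 ≤ t) (htm : t ≤ m) (ht'1 : 1 ≤ t') (ht'm : t' ≤ m)
    (heq : rank t = rank t') :
    L t / L t' ≤ 3 ^ m := by
  have hmono : ∀ a b, 1 ≤ a → a ≤ b → b ≤ m → L a ≤ L b := by
    intro a b ha hab hbm
    induction b, hab using Nat.le_induction with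
    | base => exact le_refl _
    | succ b hb ih =>
      exact (ih (by omega)).trans (hsort b (by omega) hbm)
  set S : ℕ → ℝ := fun n => ∑ s ∈ Finset.Icc 1 n, L s with hS
  have hrank_mono : ∀ a b, 1 ≤ a → a ≤ b → b ≤ m → rank a ≤ rank b := by
    intro a b ha hab hbm
    induction b, hab using Nat.le_induction with
    | base => exact le_refl _
    | succ b hb ih =>
      have h := hrank (b + 1) (by omega) hbm
      have hb1 : b + 1 - 1 = b := by omega
      rw [hb1] at h
      have hab' : rank a ≤ rank b := ih (by omega)
      split at h <;> omega
  have hLt'pos : 0 < L t' := hpos t' ht'1 ht'm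
  have h3m : (1 : ℝ) ≤ 3 ^ m := one_le_pow₀ (by norm_num)
  rcases le_or_gt t t' with h | h
  · have h1 : L t ≤ L t' := hmono t t' ht1 h ht'm
    have h2 : L t / L t' ≤ 1 := (div_le_one hLt'pos).mpr h1
    exact h2.trans h3m
  · -- t' < t
    have hcond : ∀ s, t' < s → s ≤ t → L s ≤ 2 * S (s - 1) := by
      intro s hs1 hs2
      have hr := hrank s (by omega) (le_trans hs2 htm)
      by_contra hc
      push_neg at hc
      rw [if_neg (not_le.mpr hc)] at hr
      have e1 : rank t' ≤ rank (s - 1) :=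
        hrank_mono t' (s - 1) ht'1 (by omega) (by omega)
      have e2 : rank s ≤ rank t := hrank_mono s t (by omega) hs2 htm
      omega
    have hchain : ∀ b, t' ≤ b → b ≤ t - 1 → S b ≤ 3 ^ (b - t') * S t' := by
      intro b hb1 hb2
      induction b, hb1 using Nat.le_induction with
      | base => simp
      | succ b hb ih =>
        have ih' : S b ≤ 3 ^ (b - t') * S t' := ih (by omega)
        have hsum : S (b + 1) = S b + L (b + 1) :=
          Finset.sum_Icc_succ_top (by omega) L
        have hL : L (b + 1) ≤ 2 * S b := by
          have := hcond (b + 1) (by omega) (by omega)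
          simpa using this
        have hexp : b + 1 - t' = (b - t') + 1 := by omega
        rw [hexp, pow_succ]
        have h3 := mul_le_mul_of_nonneg_left ih' (by norm_num : (0:ℝ) ≤ 3)
        nlinarith [h3, hsum, hL]
    have hSt1 : S (t - 1) ≤ 3 ^ (t - 1 - t') * S t' :=
      hchain (t - 1) (by omega) le_rfl
    have hLt : L t ≤ 2 * S (t - 1) := hcond t h le_rfl
    have hSt' : S t' ≤ t' * L t' := by
      have h1 : S t' ≤ ∑ _s ∈ Finset.Icc 1 t', L t' := by
        apply Finset.sum_le_sum
        intro i hi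
        rw [Finset.mem_Icc] at hi
        exact hmono i t' hi.1 hi.2 ht'm
      have h2 : (∑ _s ∈ Finset.Icc 1 t', L t') = t' * L t' := by
        rw [Finset.sum_const, Nat.card_Icc]
        simp [nsmul_eq_mul]
      linarith [h1, h2.le, h2.ge]
    have h2t' : (2 * t' : ℝ) ≤ 3 ^ t' := by
      exact_mod_cast Nat.cast_le.mpr (stmt15_aux_2n t')
    have hpow : (3 : ℝ) ^ t' * 3 ^ (t - 1 - t') = 3 ^ (t - 1) := by
      rw [← pow_add]
      congr 1
      omega
    have hpowle : (3 : ℝ) ^ (t - 1) ≤ 3 ^ m :=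
      pow_le_pow_right₀ (by norm_num) (by omega)
    have hfin : L t ≤ 3 ^ m * L t' := by
      have hp1 : (0:ℝ) ≤ 3 ^ (t - 1 - t') := by positivity
      have s1 : S (t - 1) ≤ 3 ^ (t - 1 - t') * (t' * L t') := by
        refine hSt1.trans ?_
        exact mul_le_mul_of_nonneg_left hSt' hp1
      have s2 : L t ≤ 2 * (3 ^ (t - 1 - t') * (t' * L t')) := by
        refine hLt.trans ?_
        linarith [s1]
      have s3 : 2 * (3 ^ (t - 1 - t') * ((t':ℝ) * L t'))
          = (2 * t') * 3 ^ (t - 1 - t') * L t' := by ring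
      have s4 : (2 * (t':ℝ)) * 3 ^ (t - 1 - t') * L t'
          ≤ 3 ^ t' * 3 ^ (t - 1 - t') * L t' := by
        have := mul_le_mul_of_nonneg_right
          (mul_le_mul_of_nonneg_right h2t' hp1) hLt'pos.le
        exact this
      have s5 : (3:ℝ) ^ t' * 3 ^ (t - 1 - t') * L t' ≤ 3 ^ m * L t' := by
        rw [hpow]
        exact mul_le_mul_of_nonneg_right hpowle hLt'pos.le
      calc L t ≤ 2 * (3 ^ (t - 1 - t') * ((t':ℝ) * L t')) := s2
        _ = (2 * t') * 3 ^ (t - 1 - t') * L t' := s3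
        _ ≤ 3 ^ t' * 3 ^ (t - 1 - t') * L t' := s4
        _ ≤ 3 ^ m * L t' := s5
    rw [div_le_iff₀ hLt'pos]
    exact hfin
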